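/- Suppose the scalar code C*_{a,r} has the following property: for every erasure set E ⊆ {0,…,a(r+1)−1} with |E| = a and all codewords x, y ∈ C*_{a,r} satisfying x_j = y_j for every j ∉ E, one has x_i = y_i for every i ∈ E ∩ {0,…,r−1}. Then the Construction-1 packet-level code C_{(a,a(r+1)−1,r)} is an (a, a(r+1)−1) streaming code. -/
import Mathlib


/-- A packet-level code with a causal systematic encoder: the parity part of the
coded packet at time `t` is a fixed function of the message packets at times `≤ t`. -/
structure PacketCode (F : Type) (k n : ℕ) where
  parity : (ℤ → Fin k → F) → ℤ → Fin (n - k) → F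
  causal : ∀ (m m' : ℤ → Fin k → F) (t : ℤ),
    (∀ t' ≤ t, m t' = m' t') → parity m t = parity m' t

/-- A valid message stream vanishes at negative times. -/
def IsMsgStream {F : Type} [Zero F] {k : ℕ} (m : ℤ → Fin k → F) : Prop :=
  ∀ t < 0, m t = 0

/-- `(a, τ)` streaming-code property. -/
def IsSC {F : Type} [Zero F] {k n : ℕ} (C : PacketCode F k n) (a τ : ℕ) : Prop :=
  ∀ m m' : ℤ → Fin k → F, IsMsgStream m → IsMsgStream m' →
    ∀ t : ℤ, 0 ≤ t →
      ∀ E : Finset ℤ, (∀ x ∈ E, t ≤ x ∧ x ≤ t + τ) → t ∈ E → E.card ≤ a →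
        (∀ t' < t, m t' = m' t') →
        (∀ t' : ℤ, t ≤ t' → t' ≤ t + τ → t' ∉ E →
          m t' = m' t' ∧ C.parity m t' = C.parity m' t') →
        m t = m' t

/-- `(a, τ, r)` locally recoverable streaming code. -/
def IsLRSC {F : Type} [Zero F] {k n : ℕ} (C : PacketCode F k n) (a τ r : ℕ) : Prop :=
  IsSC C a τ ∧ IsSC C 1 r
/-- Every square submatrix of `M` is nonsingular. -/
def AllSquareSubmatricesNonsingular {K : Type} [Field K] {r a : ℕ}
    (M : Matrix (Fin r) (Fin a) K) : Prop :=
  ∀ (z : ℕ) (ρ : Fin z → Fin r) (σ : Fin z → Fin a),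
    Function.Injective ρ → Function.Injective σ → (M.submatrix ρ σ).det ≠ 0

/-- `Γ = C ⬝ diag(α₀,…,α_{a-1})`, i.e. the `j`-th column of `C` scaled by `α j`. -/
def gammaMatrix {K : Type} [Field K] {r a : ℕ} (C : Matrix (Fin r) (Fin a) K)
    (α : Fin a → K) : Matrix (Fin r) (Fin a) K :=
  Matrix.of fun i j => C i j * α j
/-- Construction 1: the packet-level code with `k = r`, `n = r+1` and parity
`p₀(t) = Σ_{j=0}^{a-1} \hat m(t - r - j(r+1)) · Γ_j`, where
`\hat m(s) = (m_0(s), m_1(s+1), …, m_{r-1}(s+r-1))`. -/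
def construction1 {K : Type} [Field K] {r a : ℕ} (Γ : Matrix (Fin r) (Fin a) K) :
    PacketCode K r (r + 1) where
  parity := fun m t _ => ∑ j : Fin a, ∑ i : Fin r,
    Γ i j * m (t - (r : ℤ) - ((j : ℕ) : ℤ) * ((r : ℤ) + 1) + ((i : ℕ) : ℤ)) i
  causal := by
    intro m m' t h
    funext s
    refine Finset.sum_congr rfl fun j _ => Finset.sum_congr rfl fun i _ => ?_
    have h1 : (0 : ℤ) ≤ ((j : ℕ) : ℤ) * ((r : ℤ) + 1) := by positivity
    have h2 : ((i : ℕ) : ℤ) < (r : ℤ) := by exact_mod_cast i.isLt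
    rw [h (t - (r : ℤ) - ((j : ℕ) : ℤ) * ((r : ℤ) + 1) + ((i : ℕ) : ℤ)) (by linarith)]
/-- The parity-check matrix `H = [Pᵀ | -I_a]` of the scalar code `C*_{a,r}`:
columns `0,…,ar-1` come in `a` blocks of width `r`, the `(i,j)`-th `1×r` block of
`Pᵀ` being `Γ_{i-j}ᵀ` for `j ≤ i` and `0` otherwise; the last `a` columns form
`-I_a`. -/
def starH {K : Type} [Field K] {r a : ℕ} (Γ : Matrix (Fin r) (Fin a) K) :
    Matrix (Fin a) (Fin (a * (r + 1))) K :=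
  Matrix.of fun i c =>
    if hc : (c : ℕ) < a * r then
      if hji : (c : ℕ) / r ≤ (i : ℕ) then
        Γ ⟨(c : ℕ) % r, Nat.mod_lt _ (Nat.pos_of_ne_zero fun h => by
              subst h; simp at hc)⟩
          ⟨(i : ℕ) - (c : ℕ) / r, lt_of_le_of_lt (Nat.sub_le _ _) i.isLt⟩
      else 0
    else if (c : ℕ) - a * r = (i : ℕ) then -1 else 0

/-- The scalar code `C*_{a,r} = {x : H x = 0}`, an `[a(r+1), ar]` linear code. -/
def starCode {K : Type} [Field K] {r a : ℕ} (Γ : Matrix (Fin r) (Fin a) K) :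
    Set (Fin (a * (r + 1)) → K) :=
  {x | Matrix.mulVec (starH Γ) x = 0}

set_option maxHeartbeats 2000000 in
/-- If the scalar code `C*_{a,r}` can recover all erased symbols among the first
`r` coordinates from the unerased symbols, for every erasure set of size `a`,
then the Construction-1 code is an `(a, a(r+1)-1)` streaming code. -/
theorem starCode_recovery_implies_SC
    (K : Type) [Field K] [Fintype K] (q a r : ℕ)
    (hq : IsPrimePow q) (ha : 2 ≤ a) (hr : 1 ≤ r)
    (Fsub : ℕ → Subfield K) (hmono : Monotone Fsub)
    (hcard : ∀ j ≤ a - 1, Nat.card (Fsub j) = q ^ 2 ^ (j - 1))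
    (htop : Fsub (a - 1) = ⊤)
    (C : Matrix (Fin r) (Fin a) K) (hC : ∀ i j, C i j ∈ Fsub 0)
    (hCns : AllSquareSubmatricesNonsingular C)
    (α : Fin a → K)
    (hα01 : ∀ j : Fin a, (j : ℕ) ≤ 1 → α j = 1)
    (hαmem : ∀ j : Fin a, 2 ≤ (j : ℕ) → α j ∈ Fsub (j : ℕ) ∧ α j ∉ Fsub ((j : ℕ) - 1))
    (hprop : ∀ E : Finset (Fin (a * (r + 1))), E.card = a →
      ∀ x y : Fin (a * (r + 1)) → K,
        x ∈ starCode (gammaMatrix C α) → y ∈ starCode (gammaMatrix C α) →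
        (∀ j, j ∉ E → x j = y j) →
        ∀ i ∈ E, (i : ℕ) < r → x i = y i) :
    IsSC (construction1 (gammaMatrix C α)) a (a * (r + 1) - 1) := by
  classical
  intro m m' hm hm' t ht E hE htE hcardE hpast hrec
  set Γ := gammaMatrix C α with hΓdef
  have hr0 : 0 < r := hr
  have ha0 : 0 < a := by omega
  have hN0 : 0 < a * (r + 1) := Nat.mul_pos ha0 (Nat.succ_pos r)
  have hτ : ((a * (r+1) - 1 : ℕ) : ℤ) = (a : ℤ) * ((r:ℤ) + 1) - 1 := by
    have : 1 ≤ a * (r+1) := hN0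
    push_cast [Nat.cast_sub this]
    ring
  set d : ℤ → Fin r → K := fun u => m u - m' u with hd
  have hd0 : ∀ u : ℤ, u < t → ∀ i0 : Fin r, d u i0 = 0 := by
    intro u hu i0
    simp [hd, hpast u hu]
  have hdE : ∀ u : ℤ, t ≤ u → u ≤ t + ((a*(r+1) - 1 : ℕ) : ℤ) → u ∉ E →
      ∀ i0 : Fin r, d u i0 = 0 := by
    intro u h1 h2 h3 i0
    simp [hd, (hrec u h1 h2 h3).1]
  set Pd : ℤ → K := fun T => ∑ j : Fin a, ∑ i0 : Fin r,
      Γ i0 j * d (T - (r:ℤ) - ((j:ℕ):ℤ) * ((r:ℤ)+1) + ((i0:ℕ):ℤ)) i0 with hPd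
  have hPlin : ∀ T : ℤ, Pd T =
      (construction1 Γ).parity m T ⟨0, by omega⟩
        - (construction1 Γ).parity m' T ⟨0, by omega⟩ := by
    intro T
    simp only [hPd, construction1, hd, Pi.sub_apply, mul_sub, Finset.sum_sub_distrib]
  have hP0 : ∀ T : ℤ, (T < t ∨ (t ≤ T ∧ T ≤ t + ((a*(r+1) - 1 : ℕ) : ℤ) ∧ T ∉ E)) →
      Pd T = 0 := by
    intro T hT
    rcases hT with hT | ⟨h1, h2, h3⟩
    · refine Finset.sum_eq_zero fun j _ => Finset.sum_eq_zero fun i0 _ => ?_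
      have hi0 : ((i0:ℕ):ℤ) < (r:ℤ) := by exact_mod_cast i0.isLt
      have hj0 : (0:ℤ) ≤ ((j:ℕ):ℤ) * ((r:ℤ)+1) := by positivity
      rw [hd0 _ (by linarith) i0, mul_zero]
    · rw [hPlin, (hrec T h1 h2 h3).2, sub_self]
  funext i
  have hiN : (i:ℕ) < a * (r + 1) := by nlinarith [i.isLt]
  have hira : (i:ℕ) < a * r := by nlinarith [i.isLt]
  set s : ℤ := t - ((i:ℕ):ℤ) with hs
  set x : Fin (a*(r+1)) → K := fun c =>
    if hc : (c:ℕ) < a * r then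
      d (s + (((c:ℕ)/r : ℕ):ℤ) * ((r:ℤ)+1) + (((c:ℕ)%r : ℕ):ℤ)) ⟨(c:ℕ)%r, Nat.mod_lt _ hr0⟩
    else Pd (s + (r:ℤ) + (((c:ℕ) - a*r : ℕ):ℤ) * ((r:ℤ)+1)) with hx
  -- the coordinate-time map
  set φ : ℤ → Fin (a*(r+1)) := fun t0 =>
    if h : (t0 - s).toNat < a*(r+1) then
      if h2 : (t0 - s).toNat % (r+1) < r then
        ⟨((t0 - s).toNat / (r+1)) * r + (t0 - s).toNat % (r+1), by
          have hdiv : (t0 - s).toNat / (r+1) < a := Nat.div_lt_of_lt_mul (by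
            rw [mul_comm]; exact h)
          calc ((t0 - s).toNat / (r+1)) * r + (t0 - s).toNat % (r+1)
              < ((t0 - s).toNat / (r+1)) * r + r := Nat.add_lt_add_left h2 _
            _ = ((t0 - s).toNat / (r+1) + 1) * r := by ring
            _ ≤ a * r := Nat.mul_le_mul_right r hdiv
            _ ≤ a * (r+1) := Nat.mul_le_mul_left a (Nat.le_succ r)⟩
      else
        ⟨a*r + (t0 - s).toNat / (r+1), by
          have hdiv : (t0 - s).toNat / (r+1) < a := Nat.div_lt_of_lt_mul (by
            rw [mul_comm]; exact h)
          calc a*r + (t0 - s).toNat / (r+1) < a*r + a := by omega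
            _ = a * (r+1) := by ring⟩
    else ⟨0, hN0⟩ with hφ
  -- φ inverts the time map on message coordinates
  have hφmsg : ∀ cv : ℕ, cv < a*r →
      ((φ (s + ((cv % r + (cv / r) * (r+1) : ℕ) : ℤ))) : ℕ) = cv := by
    intro cv hcv
    have hdv : cv / r < a := (Nat.div_lt_iff_lt_mul hr0).2 hcv
    have hmr : cv % r < r := Nat.mod_lt _ hr0
    have hun : (s + ((cv % r + (cv / r) * (r+1) : ℕ):ℤ) - s).toNat = cv % r + (cv / r) * (r+1) := by
      rw [add_sub_cancel_left, Int.toNat_natCast]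
    have humod : (cv % r + (cv / r) * (r+1)) % (r+1) = cv % r := by
      rw [Nat.add_mul_mod_self_right, Nat.mod_eq_of_lt (by omega)]
    have hudiv : (cv % r + (cv / r) * (r+1)) / (r+1) = cv / r := by
      rw [Nat.add_mul_div_right _ _ (Nat.succ_pos r), Nat.div_eq_of_lt (by omega), Nat.zero_add]
    have huN : cv % r + (cv / r) * (r+1) < a * (r+1) := by
      calc cv % r + (cv / r) * (r+1) < (r+1) + (cv/r)*(r+1) := by omega
        _ = (cv/r + 1) * (r+1) := by ring
        _ ≤ a * (r+1) := Nat.mul_le_mul_right _ hdv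
    simp only [hφ, hun]
    rw [dif_pos huN, dif_pos (by rw [humod]; exact hmr)]
    simp only [hudiv, humod]
    calc (cv / r) * r + cv % r = r * (cv / r) + cv % r := by ring
      _ = cv := Nat.div_add_mod cv r
  -- φ inverts the time map on parity coordinates
  have hφpar : ∀ cv : ℕ, a*r ≤ cv → cv < a*(r+1) →
      ((φ (s + ((r + (cv - a*r) * (r+1) : ℕ) : ℤ))) : ℕ) = cv := by
    intro cv h1 h2
    have hv : cv - a*r < a := by
      have : a * (r+1) = a*r + a := by ring
      omega
    have hun : (s + ((r + (cv - a*r) * (r+1) : ℕ):ℤ) - s).toNat = r + (cv - a*r) * (r+1) := by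
      rw [add_sub_cancel_left, Int.toNat_natCast]
    have humod : (r + (cv - a*r) * (r+1)) % (r+1) = r := by
      rw [Nat.add_mul_mod_self_right, Nat.mod_eq_of_lt (by omega)]
    have hudiv : (r + (cv - a*r) * (r+1)) / (r+1) = cv - a*r := by
      rw [Nat.add_mul_div_right _ _ (Nat.succ_pos r), Nat.div_eq_of_lt (by omega), Nat.zero_add]
    have huN : r + (cv - a*r) * (r+1) < a * (r+1) := by
      calc r + (cv - a*r) * (r+1) < (r+1) + (cv - a*r)*(r+1) := by omega
        _ = ((cv - a*r) + 1) * (r+1) := by ring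
        _ ≤ a * (r+1) := Nat.mul_le_mul_right _ hv
    simp only [hφ, hun]
    rw [dif_pos huN, dif_neg (by rw [humod]; omega)]
    simp only [hudiv]
    omega
  -- all coordinates outside the image of E are zero in x
  have hx0 : ∀ c : Fin (a*(r+1)), c ∉ E.image φ → x c = 0 := by
    intro c hc
    by_cases hcm : (c:ℕ) < a * r
    · have hdv : (c:ℕ) / r < a := (Nat.div_lt_iff_lt_mul hr0).2 hcm
      have hmr : (c:ℕ) % r < r := Nat.mod_lt _ hr0
      have huN : (c:ℕ) % r + ((c:ℕ) / r) * (r+1) < a * (r+1) := by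
        calc (c:ℕ) % r + ((c:ℕ)/r) * (r+1) < (r+1) + ((c:ℕ)/r)*(r+1) := by omega
          _ = ((c:ℕ)/r + 1) * (r+1) := by ring
          _ ≤ a * (r+1) := Nat.mul_le_mul_right _ hdv
      have htime : s + ((((c:ℕ)/r : ℕ)):ℤ) * ((r:ℤ)+1) + ((((c:ℕ)%r : ℕ)):ℤ)
          = s + (((c:ℕ) % r + ((c:ℕ)/r) * (r+1) : ℕ):ℤ) := by push_cast; ring
      have hxc : x c = d (s + (((c:ℕ) % r + ((c:ℕ)/r) * (r+1) : ℕ):ℤ)) ⟨(c:ℕ)%r, Nat.mod_lt _ hr0⟩ := by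
        simp only [hx]
        rw [dif_pos hcm, htime]
      have hnotE : s + (((c:ℕ) % r + ((c:ℕ)/r) * (r+1) : ℕ):ℤ) ∉ E := fun hmem =>
        hc (Finset.mem_image.2 ⟨_, hmem, Fin.ext (hφmsg (c:ℕ) hcm)⟩)
      rcases lt_or_ge (s + (((c:ℕ) % r + ((c:ℕ)/r) * (r+1) : ℕ):ℤ)) t with hlt | hge
      · rw [hxc]; exact hd0 _ hlt _
      · rw [hxc]
        refine hdE _ hge ?_ hnotE _
        rw [hτ, hs]
        have hu1 : ((((c:ℕ) % r + ((c:ℕ)/r) * (r+1)) : ℕ):ℤ) < (a:ℤ) * ((r:ℤ)+1) := by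
          exact_mod_cast huN
        have hu2 : (0:ℤ) ≤ ((i:ℕ):ℤ) := Int.natCast_nonneg _
        linarith
    · have hv : (c:ℕ) - a*r < a := by
        have h2 := c.isLt
        have : a * (r+1) = a*r + a := by ring
        omega
      have huN : r + ((c:ℕ) - a*r) * (r+1) < a * (r+1) := by
        calc r + ((c:ℕ) - a*r) * (r+1) < (r+1) + ((c:ℕ) - a*r)*(r+1) := by omega
          _ = (((c:ℕ) - a*r) + 1) * (r+1) := by ring
          _ ≤ a * (r+1) := Nat.mul_le_mul_right _ hv
      have htime : s + (r:ℤ) + ((((c:ℕ) - a*r : ℕ)):ℤ) * ((r:ℤ)+1)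
          = s + ((r + ((c:ℕ) - a*r) * (r+1) : ℕ):ℤ) := by push_cast; ring
      have hxc : x c = Pd (s + ((r + ((c:ℕ) - a*r) * (r+1) : ℕ):ℤ)) := by
        simp only [hx]
        rw [dif_neg hcm, htime]
      have hnotE : s + ((r + ((c:ℕ) - a*r) * (r+1) : ℕ):ℤ) ∉ E := fun hmem =>
        hc (Finset.mem_image.2 ⟨_, hmem, Fin.ext (hφpar (c:ℕ) (by omega) c.isLt)⟩)
      rw [hxc]
      refine hP0 _ ?_
      rcases lt_or_ge (s + ((r + ((c:ℕ) - a*r) * (r+1) : ℕ):ℤ)) t with hlt | hge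
      · exact Or.inl hlt
      · refine Or.inr ⟨hge, ?_, hnotE⟩
        rw [hτ, hs]
        have hu1 : (((r + ((c:ℕ) - a*r) * (r+1)) : ℕ):ℤ) < (a:ℤ) * ((r:ℤ)+1) := by
          exact_mod_cast huN
        have hu2 : (0:ℤ) ≤ ((i:ℕ):ℤ) := Int.natCast_nonneg _
        linarith
  -- x is a codeword of the scalar code
  have key : ∀ I : Fin a, ∑ c : Fin (a*(r+1)), starH Γ I c * x c = 0 := by
    intro I
    rw [← Equiv.sum_comp (finSumFinEquiv.trans (finCongr (show a*r + a = a*(r+1) by ring)))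
        (fun c => starH Γ I c * x c), Fintype.sum_sum_type]
    -- parity part
    have hparterm : ∀ p : Fin a,
        (fun c => starH Γ I c * x c)
          ((finSumFinEquiv.trans (finCongr (show a*r + a = a*(r+1) by ring))) (Sum.inr p))
        = (if p = I then -Pd (s + (r:ℤ) + ((p:ℕ):ℤ) * ((r:ℤ)+1)) else 0) := by
      intro p
      have hcoe : (((finSumFinEquiv.trans (finCongr (show a*r + a = a*(r+1) by ring)))
          (Sum.inr p)) : ℕ) = a*r + (p:ℕ) := rfl
      simp only [starH, Matrix.of_apply, hx, hcoe]
      rw [dif_neg (by omega), dif_neg (by omega)]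
      simp only [Nat.add_sub_cancel_left]
      by_cases hpI : p = I
      · rw [if_pos (by rw [hpI]), if_pos hpI, hpI, neg_one_mul]
      · rw [if_neg (fun h => hpI (Fin.ext h)), if_neg hpI, zero_mul]
    have hpar : (∑ p : Fin a, (fun c => starH Γ I c * x c)
          ((finSumFinEquiv.trans (finCongr (show a*r + a = a*(r+1) by ring))) (Sum.inr p)))
        = -Pd (s + (r:ℤ) + ((I:ℕ):ℤ) * ((r:ℤ)+1)) := by
      rw [Finset.sum_congr rfl (fun p _ => hparterm p), Finset.sum_ite_eq' Finset.univ I]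
      simp
    rw [hpar]
    -- message part
    rw [← Equiv.sum_comp finProdFinEquiv
        (fun c : Fin (a*r) => (fun c0 => starH Γ I c0 * x c0)
          ((finSumFinEquiv.trans (finCongr (show a*r + a = a*(r+1) by ring))) (Sum.inl c))),
        Fintype.sum_prod_type]
    have hmsgterm : ∀ (j : Fin a) (i0 : Fin r),
        (fun c : Fin (a*r) => (fun c0 => starH Γ I c0 * x c0)
          ((finSumFinEquiv.trans (finCongr (show a*r + a = a*(r+1) by ring))) (Sum.inl c)))
          (finProdFinEquiv (j, i0))
        = (if (j:ℕ) ≤ (I:ℕ) then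
            Γ i0 ⟨(I:ℕ) - (j:ℕ), lt_of_le_of_lt (Nat.sub_le _ _) I.isLt⟩
              * d (s + ((j:ℕ):ℤ) * ((r:ℤ)+1) + ((i0:ℕ):ℤ)) i0
          else 0) := by
      intro j i0
      have hcoe : (((finSumFinEquiv.trans (finCongr (show a*r + a = a*(r+1) by ring)))
          (Sum.inl (finProdFinEquiv (j, i0)))) : ℕ) = (i0:ℕ) + r * (j:ℕ) := rfl
      have hlt : (i0:ℕ) + r * (j:ℕ) < a * r := by
        calc (i0:ℕ) + r * (j:ℕ) < r + r * (j:ℕ) := by omega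
          _ = ((j:ℕ) + 1) * r := by ring
          _ ≤ a * r := Nat.mul_le_mul_right _ j.isLt
      have hdiv : ((i0:ℕ) + r * (j:ℕ)) / r = (j:ℕ) := by
        rw [Nat.add_mul_div_left _ _ hr0, Nat.div_eq_of_lt i0.isLt, Nat.zero_add]
      have hmod : ((i0:ℕ) + r * (j:ℕ)) % r = (i0:ℕ) := by
        rw [Nat.add_mul_mod_self_left, Nat.mod_eq_of_lt i0.isLt]
      simp only [starH, Matrix.of_apply, hx, hcoe]
      rw [dif_pos hlt, dif_pos hlt]
      simp only [hdiv, hmod, Fin.eta]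
      by_cases hjI : (j:ℕ) ≤ (I:ℕ)
      · rw [dif_pos hjI, if_pos hjI]
      · rw [dif_neg hjI, if_neg hjI, zero_mul]
    rw [Finset.sum_congr rfl (fun j _ => Finset.sum_congr rfl (fun i0 _ => hmsgterm j i0))]
    -- it remains to show the message sum equals the parity value
    rw [add_neg_eq_zero]
    have hPdT : Pd (s + (r:ℤ) + ((I:ℕ):ℤ) * ((r:ℤ)+1))
        = ∑ j : Fin a, ∑ i0 : Fin r,
            Γ i0 j * d (s + (((I:ℕ):ℤ) - ((j:ℕ):ℤ)) * ((r:ℤ)+1) + ((i0:ℕ):ℤ)) i0 := by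
      simp only [hPd]
      refine Finset.sum_congr rfl fun j _ => Finset.sum_congr rfl fun i0 _ => ?_
      congr 2
      ring
    rw [hPdT]
    -- pull the `if` out of the inner sums on the left
    have hpull : ∀ j : Fin a,
        (∑ i0 : Fin r, (if (j:ℕ) ≤ (I:ℕ) then
            Γ i0 ⟨(I:ℕ) - (j:ℕ), lt_of_le_of_lt (Nat.sub_le _ _) I.isLt⟩
              * d (s + ((j:ℕ):ℤ) * ((r:ℤ)+1) + ((i0:ℕ):ℤ)) i0
          else 0))
        = (if (j:ℕ) ≤ (I:ℕ) then
            ∑ i0 : Fin r, Γ i0 ⟨(I:ℕ) - (j:ℕ), lt_of_le_of_lt (Nat.sub_le _ _) I.isLt⟩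
              * d (s + ((j:ℕ):ℤ) * ((r:ℤ)+1) + ((i0:ℕ):ℤ)) i0
          else 0) := by
      intro j
      split <;> simp
    rw [Finset.sum_congr rfl (fun j _ => hpull j), ← Finset.sum_filter]
    -- on the right, terms with I < j vanish
    rw [← Finset.sum_filter_add_sum_filter_not Finset.univ (fun j : Fin a => (j:ℕ) ≤ (I:ℕ))
        (fun j => ∑ i0 : Fin r,
          Γ i0 j * d (s + (((I:ℕ):ℤ) - ((j:ℕ):ℤ)) * ((r:ℤ)+1) + ((i0:ℕ):ℤ)) i0)]
    have hvanish : (∑ j ∈ Finset.univ.filter (fun j : Fin a => ¬ (j:ℕ) ≤ (I:ℕ)),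
        ∑ i0 : Fin r,
          Γ i0 j * d (s + (((I:ℕ):ℤ) - ((j:ℕ):ℤ)) * ((r:ℤ)+1) + ((i0:ℕ):ℤ)) i0) = 0 := by
      refine Finset.sum_eq_zero fun j hj => Finset.sum_eq_zero fun i0 _ => ?_
      have hIj : (I:ℕ) < (j:ℕ) := by
        have := (Finset.mem_filter.1 hj).2
        omega
      have h1 : ((I:ℕ):ℤ) - ((j:ℕ):ℤ) ≤ -1 := by
        have : ((I:ℕ):ℤ) < ((j:ℕ):ℤ) := by exact_mod_cast hIj
        omega
      have h2 : ((i0:ℕ):ℤ) < (r:ℤ) := by exact_mod_cast i0.isLt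
      have h3 : s ≤ t := by
        rw [hs]
        have : (0:ℤ) ≤ ((i:ℕ):ℤ) := Int.natCast_nonneg _
        linarith
      have harg : s + (((I:ℕ):ℤ) - ((j:ℕ):ℤ)) * ((r:ℤ)+1) + ((i0:ℕ):ℤ) < t := by
        have hrr : (0:ℤ) ≤ (r:ℤ) := Int.natCast_nonneg _
        nlinarith
      rw [hd0 _ harg i0, mul_zero]
    rw [hvanish, add_zero]
    -- reindex j ↦ I - j on the filtered sum
    refine Finset.sum_nbij'
      (fun j : Fin a => (⟨(I:ℕ) - (j:ℕ), lt_of_le_of_lt (Nat.sub_le _ _) I.isLt⟩ : Fin a))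
      (fun j : Fin a => (⟨(I:ℕ) - (j:ℕ), lt_of_le_of_lt (Nat.sub_le _ _) I.isLt⟩ : Fin a))
      ?_ ?_ ?_ ?_ ?_
    · intro j hj
      simp only [Finset.mem_filter, Finset.mem_univ, true_and]
      omega
    · intro j hj
      simp only [Finset.mem_filter, Finset.mem_univ, true_and]
      omega
    · intro j hj
      have hjI : (j:ℕ) ≤ (I:ℕ) := (Finset.mem_filter.1 hj).2
      exact Fin.ext (by simp only [Fin.val_mk]; omega)
    · intro j hj
      have hjI : (j:ℕ) ≤ (I:ℕ) := (Finset.mem_filter.1 hj).2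
      exact Fin.ext (by simp only [Fin.val_mk]; omega)
    · intro j hj
      have hjI : (j:ℕ) ≤ (I:ℕ) := (Finset.mem_filter.1 hj).2
      refine Finset.sum_congr rfl fun i0 _ => ?_
      have htime : s + (((I:ℕ):ℤ)
            - ((((⟨(I:ℕ)-(j:ℕ), lt_of_le_of_lt (Nat.sub_le _ _) I.isLt⟩ : Fin a)):ℕ):ℤ))
              * ((r:ℤ)+1) + ((i0:ℕ):ℤ)
          = s + ((j:ℕ):ℤ) * ((r:ℤ)+1) + ((i0:ℕ):ℤ) := by
        simp only [Fin.val_mk]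
        have hc2 : ((((I:ℕ)-(j:ℕ)):ℕ):ℤ) = ((I:ℕ):ℤ) - ((j:ℕ):ℤ) := by omega
        rw [hc2]; ring
      rw [htime]
  have hxcode : x ∈ starCode Γ := by
    show Matrix.mulVec (starH Γ) x = 0
    funext I
    simpa [Matrix.mulVec, dotProduct] using key I
  have h0code : (0 : Fin (a*(r+1)) → K) ∈ starCode Γ := by
    show Matrix.mulVec (starH Γ) 0 = 0
    rw [Matrix.mulVec_zero]
  obtain ⟨E'', hsub1, -, hEc⟩ := Finset.exists_subsuperset_card_eq
    (Finset.subset_univ (E.image φ)) (le_trans Finset.card_image_le hcardE)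
    (by rw [Finset.card_univ, Fintype.card_fin]; nlinarith)
  have hφt : φ t = ⟨(i:ℕ), hiN⟩ := by
    have h3 := hφmsg (i:ℕ) hira
    have htm : s + ((((i:ℕ)%r + ((i:ℕ)/r)*(r+1)) : ℕ):ℤ) = t := by
      rw [Nat.mod_eq_of_lt i.isLt, Nat.div_eq_of_lt i.isLt, hs]
      push_cast
      ring
    rw [htm] at h3
    exact Fin.ext h3
  have hiE : (⟨(i:ℕ), hiN⟩ : Fin (a*(r+1))) ∈ E'' := hsub1 (Finset.mem_image.2 ⟨t, htE, hφt⟩)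
  have hres := hprop E'' hEc x 0 hxcode h0code
    (fun j hj => by rw [hx0 j (fun hm2 => hj (hsub1 hm2))]; rfl)
    ⟨(i:ℕ), hiN⟩ hiE i.isLt
  have hxi : x ⟨(i:ℕ), hiN⟩ = d t i := by
    have hv : ((⟨(i:ℕ), hiN⟩ : Fin (a*(r+1))) : ℕ) = (i:ℕ) := rfl
    simp only [hx, hv]
    rw [dif_pos hira]
    have htm : s + (((i:ℕ)/r : ℕ):ℤ)*((r:ℤ)+1) + (((i:ℕ)%r : ℕ):ℤ) = t := by
      rw [Nat.mod_eq_of_lt i.isLt, Nat.div_eq_of_lt i.isLt, hs]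
      push_cast
      ring
    rw [htm]
    exact congrArg (d t) (Fin.ext (Nat.mod_eq_of_lt i.isLt))
  rw [hxi] at hres
  have hz : m t i - m' t i = 0 := by simpa [hd] using hres
  exact sub_eq_zero.1 hz
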